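/- Let n_o ≥ 1, m ≥ 1, and define the block matrices 𝒜 ∈ ℝ^{(m·n_o)×(m·n_o)} (the upper shift: 𝒜 has identity blocks I_m on its first superdiagonal and zeros elsewhere), ℬ ∈ ℝ^{(m·n_o)×m} (all blocks zero except the last, equal to I_m), and 𝒞 ∈ ℝ^{m×(m·n_o)} (first block I_m, rest zero). Then for every ν > 0 there exist a symmetric positive definite matrix 𝒫 ∈ ℝ^{(m·n_o)×(m·n_o)}, a matrix 𝒦 ∈ ℝ^{(m·n_o)×m}, and a strictly positive real q such that 𝒫(𝒜 − 𝒦𝒞) + (𝒜 − 𝒦𝒞)ᵀ𝒫 + 2q I + (1/(qν²)) 𝒫 ℬ ℬᵀ 𝒫 ≤ 0 (in the sense of negative semidefiniteness). -/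

import Mathlib

open Matrix

/-- Block upper-shift matrix 𝒜 in prime (Brunovsky) form, with `I_m` blocks on
the first block superdiagonal. Indices are pairs (block, coordinate-in-block). -/
def primeA (n_o m : ℕ) : Matrix (Fin n_o × Fin m) (Fin n_o × Fin m) ℝ :=
  Matrix.of fun p q => if (p.1 : ℕ) + 1 = (q.1 : ℕ) ∧ p.2 = q.2 then 1 else 0

/-- Block matrix ℬ: all blocks zero except the last one, equal to `I_m`. -/
def primeB (n_o m : ℕ) : Matrix (Fin n_o × Fin m) (Fin m) ℝ :=
  Matrix.of fun p j => if (p.1 : ℕ) = n_o - 1 ∧ p.2 = j then 1 else 0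

/-- Block matrix 𝒞: first block `I_m`, remaining blocks zero. -/
def primeC (n_o m : ℕ) : Matrix (Fin m) (Fin n_o × Fin m) ℝ :=
  Matrix.of fun i q => if (q.1 : ℕ) = 0 ∧ q.2 = i then 1 else 0

/-- minimum eigenvalue bound via compactness -/
lemma exists_lambda {k : Type*} [Fintype k] [DecidableEq k] [Nonempty k]
    (M : Matrix k k ℝ) (hM : ∀ v : k → ℝ, v ≠ 0 → 0 < v ⬝ᵥ (M *ᵥ v)) :
    ∃ lam : ℝ, 0 < lam ∧ ∀ v : k → ℝ, lam * (v ⬝ᵥ v) ≤ v ⬝ᵥ (M *ᵥ v) := by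
  have hQcont : Continuous fun v : k → ℝ => v ⬝ᵥ (M *ᵥ v) := by
    unfold dotProduct Matrix.mulVec dotProduct
    fun_prop
  have hNcont : Continuous fun v : k → ℝ => v ⬝ᵥ v := by
    unfold dotProduct; fun_prop
  set Sph : Set (k → ℝ) := {v | v ⬝ᵥ v = 1} with hSph
  have hclosed : IsClosed Sph := isClosed_eq hNcont continuous_const
  have hsub : Sph ⊆ Metric.closedBall 0 1 := by
    intro v hv
    simp only [Metric.mem_closedBall, dist_zero_right]
    rw [pi_norm_le_iff_of_nonneg (by norm_num)]
    intro i
    rw [Real.norm_eq_abs, abs_le]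
    have h1 : v i * v i ≤ 1 := by
      have : ∀ j ∈ Finset.univ, 0 ≤ v j * v j := fun j _ => mul_self_nonneg _
      calc v i * v i ≤ ∑ j, v j * v j := Finset.single_le_sum this (Finset.mem_univ i)
        _ = 1 := hv
    constructor <;> nlinarith
  have hcpt : IsCompact Sph := (isCompact_closedBall (0 : k → ℝ) 1).of_isClosed_subset hclosed hsub
  have hne : Sph.Nonempty := by
    refine ⟨Pi.single (Classical.arbitrary k) 1, ?_⟩
    simp [hSph, dotProduct]
    rw [Finset.sum_eq_single (Classical.arbitrary k)]
    · simp
    · intro b _ hb; simp [Pi.single_apply, hb]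
    · simp
  obtain ⟨v₀, hv₀, hmin⟩ := hcpt.exists_isMinOn hne hQcont.continuousOn
  have hv₀ne : v₀ ≠ 0 := by
    intro h
    rw [hSph] at hv₀
    simp [h] at hv₀
  refine ⟨v₀ ⬝ᵥ (M *ᵥ v₀), hM v₀ hv₀ne, fun v => ?_⟩
  by_cases hv : v = 0
  · simp [hv]
  · have hvv : 0 < v ⬝ᵥ v := by
      have h1 : (0:ℝ) ≤ v ⬝ᵥ v := Finset.sum_nonneg fun j _ => mul_self_nonneg _
      rcases h1.lt_or_eq with h | h
      · exact h
      · exfalso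
        have : ∀ i, v i = 0 := by
          intro i
          have h2 : ∀ j ∈ Finset.univ, 0 ≤ v j * v j := fun j _ => mul_self_nonneg _
          have h3 : v i * v i ≤ 0 := by
            calc v i * v i ≤ ∑ j, v j * v j := Finset.single_le_sum h2 (Finset.mem_univ i)
              _ = 0 := h.symm
          nlinarith [mul_self_nonneg (v i)]
        exact hv (funext this)
    set c : ℝ := Real.sqrt (v ⬝ᵥ v) with hc
    have hcpos : 0 < c := Real.sqrt_pos.2 hvv
    have hu : (c⁻¹ • v) ∈ Sph := by
      simp only [hSph, Set.mem_setOf_eq, smul_dotProduct, dotProduct_smul,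
        smul_eq_mul]
      rw [← mul_assoc, ← mul_inv, Real.mul_self_sqrt hvv.le]
      exact inv_mul_cancel₀ hvv.ne'
    have hle := hmin hu
    have hQu : (c⁻¹ • v) ⬝ᵥ (M *ᵥ (c⁻¹ • v)) = c⁻¹ * (c⁻¹ * (v ⬝ᵥ (M *ᵥ v))) := by
      rw [Matrix.mulVec_smul, smul_dotProduct, dotProduct_smul]
      simp [smul_eq_mul]
    simp only [Set.mem_setOf_eq] at hle
    rw [hQu] at hle
    have hcc : c * c = v ⬝ᵥ v := Real.mul_self_sqrt hvv.le
    have hc2 : c⁻¹ * c = 1 := inv_mul_cancel₀ hcpos.ne'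
    have key := mul_le_mul_of_nonneg_right hle (mul_pos hcpos hcpos).le
    have h4 : (c⁻¹ * (c⁻¹ * (v ⬝ᵥ (M *ᵥ v)))) * (c * c)
        = ((c⁻¹ * c) * (c⁻¹ * c)) * (v ⬝ᵥ (M *ᵥ v)) := by ring
    rw [h4, hc2, one_mul, one_mul] at key
    rw [← hcc]
    exact key

/-- Cauchy-Schwarz for a psd symmetric real matrix quadratic form. -/
lemma cs_psd {k : Type*} [Fintype k] (M : Matrix k k ℝ) (hsym : Mᵀ = M)
    (hpsd : ∀ x : k → ℝ, 0 ≤ x ⬝ᵥ (M *ᵥ x)) (u w : k → ℝ) :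
    (u ⬝ᵥ (M *ᵥ w)) ^ 2 ≤ (u ⬝ᵥ (M *ᵥ u)) * (w ⬝ᵥ (M *ᵥ w)) := by
  have hcross : ∀ x y : k → ℝ, x ⬝ᵥ (M *ᵥ y) = y ⬝ᵥ (M *ᵥ x) := by
    intro x y
    rw [Matrix.dotProduct_mulVec, ← Matrix.mulVec_transpose, hsym, dotProduct_comm]
  have hquad : ∀ s : ℝ, 0 ≤ (w ⬝ᵥ (M *ᵥ w)) * (s * s) + (2 * (u ⬝ᵥ (M *ᵥ w))) * s
      + (u ⬝ᵥ (M *ᵥ u)) := by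
    intro s
    have h := hpsd (u + s • w)
    have hexp : (u + s • w) ⬝ᵥ (M *ᵥ (u + s • w))
        = (w ⬝ᵥ (M *ᵥ w)) * (s * s) + (2 * (u ⬝ᵥ (M *ᵥ w))) * s + (u ⬝ᵥ (M *ᵥ u)) := by
      simp only [Matrix.mulVec_add, Matrix.mulVec_smul, add_dotProduct,
        dotProduct_add, smul_dotProduct, dotProduct_smul,
        smul_eq_mul, hcross w u]
      ring
    rw [hexp] at h
    exact h
  have hd := discrim_le_zero hquad
  rw [discrim] at hd
  nlinarith [hd]

/-- Vandermonde for Fin-indexed sums. -/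
lemma vander_fin (n : ℕ) (i j : Fin n) :
    ∑ k : Fin n, (((i:ℕ).choose k : ℝ) * ((j:ℕ).choose k : ℝ))
      = (((i:ℕ) + (j:ℕ)).choose (i:ℕ) : ℝ) := by
  have key : ∑ k ∈ Finset.range n, ((i:ℕ).choose k) * ((j:ℕ).choose k)
      = ((i:ℕ) + (j:ℕ)).choose (j:ℕ) := by
    rw [Nat.add_choose_eq]
    rw [Finset.Nat.sum_antidiagonal_eq_sum_range_succ (f := fun a b => (i:ℕ).choose a * (j:ℕ).choose b)]
    rw [← Finset.sum_range_add_sum_Ico _ (Nat.succ_le_of_lt j.isLt)]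
    have h2 : ∑ k ∈ Finset.Ico (j:ℕ).succ n, ((i:ℕ).choose k) * ((j:ℕ).choose k) = 0 := by
      apply Finset.sum_eq_zero
      intro k hk
      rw [Finset.mem_Ico] at hk
      rw [Nat.choose_eq_zero_of_lt (Nat.lt_of_succ_le hk.1)]
      simp
    rw [h2, add_zero]
    apply Finset.sum_congr rfl
    intro k hk
    rw [Finset.mem_range, Nat.lt_succ_iff] at hk
    rw [Nat.choose_symm hk]
  have hsymm : ((i:ℕ)+(j:ℕ)).choose (j:ℕ) = ((i:ℕ)+(j:ℕ)).choose (i:ℕ) := by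
    have h := Nat.choose_symm (Nat.le_add_right (i:ℕ) (j:ℕ))
    rwa [Nat.add_sub_cancel_left] at h
  rw [Fin.sum_univ_eq_sum_range (fun k => (((i:ℕ).choose k : ℝ) * ((j:ℕ).choose k : ℝ)))]
  calc ∑ k ∈ Finset.range n, (((i:ℕ).choose k : ℝ) * ((j:ℕ).choose k : ℝ))
      = ((∑ k ∈ Finset.range n, (i:ℕ).choose k * (j:ℕ).choose k : ℕ) : ℝ) := by
        push_cast; rfl
    _ = _ := by rw [key, hsymm]

/-- scalar entries of the Riccati solution -/
noncomputable def sFun (t : ℝ) (i j : ℕ) : ℝ :=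
  (-1 : ℝ)^(i+j) * (((i+j).choose i : ℕ) : ℝ) * t^(i+j+1)

lemma sFun_symm (t : ℝ) (i j : ℕ) : sFun t i j = sFun t j i := by
  unfold sFun
  have h := Nat.choose_symm (Nat.le_add_right i j)
  rw [Nat.add_sub_cancel_left] at h
  rw [add_comm j i, ← h]

lemma lyap (t : ℝ) (ht : t ≠ 0) (i j : ℕ) :
    (if j = 0 then 0 else sFun t i (j-1)) + (if i = 0 then 0 else sFun t (i-1) j)
      + t⁻¹ * sFun t i j = if i = 0 ∧ j = 0 then 1 else 0 := by
  rcases i with _ | i <;> rcases j with _ | j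
  · simp only [if_pos rfl, and_self, zero_add]
    unfold sFun
    norm_num
    exact inv_mul_cancel₀ ht
  · simp only [Nat.succ_ne_zero, if_false, if_true, and_false, Nat.succ_sub_one]
    unfold sFun
    simp only [Nat.zero_add, Nat.choose_zero_right, Nat.cast_one, mul_one, one_mul, add_zero]
    field_simp
    ring
  · simp only [Nat.succ_ne_zero, if_false, if_true, false_and, Nat.succ_sub_one]
    unfold sFun
    simp only [Nat.add_zero, Nat.choose_self, Nat.cast_one, mul_one, zero_add]
    field_simp
    ring
  · simp only [Nat.succ_ne_zero, if_false, false_and, Nat.succ_sub_one]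
    unfold sFun
    have hP : (((i+1) + (j+1)).choose (i+1) : ℝ)
        = (((i+1) + j).choose (i+1) : ℝ) + ((i + (j+1)).choose i : ℝ) := by
      have h1 : (i+1) + (j+1) = (i+j+1) + 1 := by omega
      have h2 : (i+1) + j = i+j+1 := by omega
      have h3 : i + (j+1) = i+j+1 := by omega
      rw [h1, h2, h3]
      rw [Nat.choose_succ_succ]
      push_cast
      ring
    rw [hP]
    field_simp
    ring

/-- Pascal matrix -/
noncomputable def P1mat (n : ℕ) : Matrix (Fin n) (Fin n) ℝ :=
  Matrix.of fun i j => ((((i:ℕ)+(j:ℕ)).choose (i:ℕ) : ℕ) : ℝ)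

lemma P1quad (n : ℕ) (v : Fin n → ℝ) :
    v ⬝ᵥ (P1mat n *ᵥ v)
      = ∑ k : Fin n, (∑ i : Fin n, (((i:ℕ).choose (k:ℕ) : ℕ) : ℝ) * v i)^2 := by
  have lhs : v ⬝ᵥ (P1mat n *ᵥ v)
      = ∑ i : Fin n, ∑ j : Fin n, (v i * v j) * ((((i:ℕ)+(j:ℕ)).choose (i:ℕ) : ℕ) : ℝ) := by
    simp only [dotProduct, Matrix.mulVec, dotProduct, P1mat, Matrix.of_apply,
      Finset.mul_sum]
    apply Finset.sum_congr rfl; intro i _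
    apply Finset.sum_congr rfl; intro j _
    ring
  rw [lhs]
  have rhs : ∀ k : Fin n, (∑ i : Fin n, (((i:ℕ).choose (k:ℕ) : ℕ) : ℝ) * v i)^2
      = ∑ i : Fin n, ∑ j : Fin n, (v i * v j)
          * ((((i:ℕ).choose (k:ℕ) : ℕ) : ℝ) * (((j:ℕ).choose (k:ℕ) : ℕ) : ℝ)) := by
    intro k
    rw [sq, Finset.sum_mul_sum]
    apply Finset.sum_congr rfl; intro i _
    apply Finset.sum_congr rfl; intro j _
    ring
  simp only [rhs]
  calc ∑ i : Fin n, ∑ j : Fin n, (v i * v j) * ((((i:ℕ)+(j:ℕ)).choose (i:ℕ) : ℕ) : ℝ)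
      = ∑ i : Fin n, ∑ j : Fin n, ∑ k : Fin n, (v i * v j)
          * ((((i:ℕ).choose (k:ℕ) : ℕ) : ℝ) * (((j:ℕ).choose (k:ℕ) : ℕ) : ℝ)) := by
        apply Finset.sum_congr rfl; intro i _
        apply Finset.sum_congr rfl; intro j _
        rw [← Finset.mul_sum, vander_fin]
    _ = ∑ i : Fin n, ∑ k : Fin n, ∑ j : Fin n, (v i * v j)
          * ((((i:ℕ).choose (k:ℕ) : ℕ) : ℝ) * (((j:ℕ).choose (k:ℕ) : ℕ) : ℝ)) := by
        apply Finset.sum_congr rfl; intro i _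
        exact Finset.sum_comm
    _ = ∑ k : Fin n, ∑ i : Fin n, ∑ j : Fin n, (v i * v j)
          * ((((i:ℕ).choose (k:ℕ) : ℕ) : ℝ) * (((j:ℕ).choose (k:ℕ) : ℕ) : ℝ)) :=
        Finset.sum_comm

lemma P1pos (n : ℕ) (v : Fin n → ℝ) (hv : v ≠ 0) : 0 < v ⬝ᵥ (P1mat n *ᵥ v) := by
  rw [P1quad]
  have hnn : ∀ k ∈ Finset.univ (α := Fin n),
      (0:ℝ) ≤ (∑ i : Fin n, (((i:ℕ).choose (k:ℕ) : ℕ) : ℝ) * v i)^2 :=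
    fun k _ => sq_nonneg _
  rcases (Finset.sum_nonneg hnn).lt_or_eq with h | h
  · exact h
  exfalso
  have hall : ∀ k : Fin n, (∑ i : Fin n, (((i:ℕ).choose (k:ℕ) : ℕ) : ℝ) * v i) = 0 := by
    intro k
    have := (Finset.sum_eq_zero_iff_of_nonneg hnn).1 h.symm k (Finset.mem_univ k)
    exact pow_eq_zero_iff (n := 2) (by norm_num) |>.1 this
  set s : Finset (Fin n) := Finset.univ.filter (fun i => v i ≠ 0) with hs
  have hsne : s.Nonempty := by
    rcases Function.ne_iff.1 hv with ⟨i, hi⟩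
    exact ⟨i, by simp only [hs, Finset.mem_filter, Finset.mem_univ, true_and]; simpa using hi⟩
  set i₀ := s.max' hsne with hi₀
  have hi₀mem : i₀ ∈ s := s.max'_mem hsne
  have hvi₀ : v i₀ ≠ 0 := by simpa [hs] using hi₀mem
  have : (∑ i : Fin n, (((i:ℕ).choose ((i₀:Fin n):ℕ) : ℕ) : ℝ) * v i) = v i₀ := by
    rw [Finset.sum_eq_single i₀]
    · simp
    · intro c _ hc
      by_cases hvc : v c = 0
      · rw [hvc, mul_zero]
      · have hcs : c ∈ s := by simp [hs, hvc]
        have hle : c ≤ i₀ := s.le_max' c hcs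
        have hlt : (c:ℕ) < (i₀:ℕ) := lt_of_le_of_ne (Fin.le_iff_val_le_val.1 hle)
          (fun hcc => hc (Fin.ext hcc))
        rw [Nat.choose_eq_zero_of_lt hlt]
        simp
    · simp
  rw [hall i₀] at this
  exact hvi₀ this.symm

noncomputable def Smat (n : ℕ) (t : ℝ) : Matrix (Fin n) (Fin n) ℝ :=
  Matrix.of fun i j => sFun t (i:ℕ) (j:ℕ)

lemma Squad (n : ℕ) (t : ℝ) (u : Fin n → ℝ) :
    u ⬝ᵥ (Smat n t *ᵥ u)
      = t * ((fun i : Fin n => (-1:ℝ)^(i:ℕ) * t^(i:ℕ) * u i)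
          ⬝ᵥ (P1mat n *ᵥ (fun i : Fin n => (-1:ℝ)^(i:ℕ) * t^(i:ℕ) * u i))) := by
  simp only [dotProduct, Matrix.mulVec, dotProduct, Smat, P1mat, Matrix.of_apply,
    Finset.mul_sum]
  apply Finset.sum_congr rfl; intro i _
  apply Finset.sum_congr rfl; intro j _
  unfold sFun
  rw [pow_add ((-1:ℝ)) (i:ℕ) (j:ℕ), show (i:ℕ)+(j:ℕ)+1 = (i:ℕ)+((j:ℕ)+1) by omega,
    pow_add t (i:ℕ) ((j:ℕ)+1), pow_succ t (j:ℕ)]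
  ring

lemma SLB (n : ℕ) (t : ℝ) (ht0 : 0 < t) (ht1 : t ≤ 1) (lam : ℝ)
    (hlb : ∀ w : Fin n → ℝ, lam * (w ⬝ᵥ w) ≤ w ⬝ᵥ (P1mat n *ᵥ w)) (hlam : 0 < lam)
    (u : Fin n → ℝ) :
    lam * t^(2*(n-1)+1) * (u ⬝ᵥ u) ≤ u ⬝ᵥ (Smat n t *ᵥ u) := by
  rw [Squad]
  set w : Fin n → ℝ := fun i : Fin n => (-1:ℝ)^(i:ℕ) * t^(i:ℕ) * u i with hw
  have h1 : lam * (w ⬝ᵥ w) ≤ w ⬝ᵥ (P1mat n *ᵥ w) := hlb w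
  have h2 : t^(2*(n-1)) * (u ⬝ᵥ u) ≤ w ⬝ᵥ w := by
    unfold dotProduct
    rw [Finset.mul_sum]
    apply Finset.sum_le_sum
    intro i _
    have hsq : ((-1:ℝ)^(i:ℕ))^2 = 1 := by
      rw [← pow_mul, mul_comm, pow_mul]; norm_num
    have h2i : t^(2*(i:ℕ)) = (t^(i:ℕ))^2 := by rw [← pow_mul, mul_comm]
    have hwi : w i * w i = t^(2*(i:ℕ)) * (u i * u i) := by
      simp only [hw]
      calc ((-1:ℝ)^(i:ℕ) * t^(i:ℕ) * u i) * ((-1:ℝ)^(i:ℕ) * t^(i:ℕ) * u i)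
          = ((-1:ℝ)^(i:ℕ))^2 * ((t^(i:ℕ))^2 * (u i * u i)) := by ring
        _ = t^(2*(i:ℕ)) * (u i * u i) := by rw [hsq, one_mul, h2i]
    rw [hwi]
    have hle : t^(2*(n-1)) ≤ t^(2*(i:ℕ)) := by
      apply pow_le_pow_of_le_one ht0.le ht1
      have := i.isLt
      omega
    nlinarith [mul_self_nonneg (u i), hle, pow_pos ht0 (2*(i:ℕ))]
  calc lam * t^(2*(n-1)+1) * (u ⬝ᵥ u) = t * (lam * (t^(2*(n-1)) * (u ⬝ᵥ u))) := by ring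
    _ ≤ t * (lam * (w ⬝ᵥ w)) := by
        apply mul_le_mul_of_nonneg_left _ ht0.le
        exact mul_le_mul_of_nonneg_left h2 hlam.le
    _ ≤ t * (w ⬝ᵥ (P1mat n *ᵥ w)) := mul_le_mul_of_nonneg_left h1 ht0.le

noncomputable def Pmat (n m : ℕ) (t : ℝ) : Matrix (Fin n × Fin m) (Fin n × Fin m) ℝ :=
  Matrix.of fun p q => if p.2 = q.2 then sFun t (p.1:ℕ) (q.1:ℕ) else 0

lemma sum_shift {n : ℕ} (f : ℕ → ℝ) (j : Fin n) :
    (∑ k : Fin n, if (k:ℕ)+1 = (j:ℕ) then f (k:ℕ) else 0)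
      = if (j:ℕ) = 0 then 0 else f ((j:ℕ)-1) := by
  by_cases hj : (j:ℕ) = 0
  · rw [if_pos hj]
    apply Finset.sum_eq_zero
    intro k _
    rw [if_neg (by omega)]
  · rw [if_neg hj]
    rw [Finset.sum_eq_single (⟨(j:ℕ)-1, by have := j.isLt; omega⟩ : Fin n)]
    · rw [if_pos (by simp; omega)]
    · intro c _ hc
      apply if_neg
      intro hcc
      apply hc
      apply Fin.ext
      simp
      omega
    · intro h
      exact absurd (Finset.mem_univ _) h

lemma Pmat_mulVec (n m : ℕ) (t : ℝ) (v : Fin n × Fin m → ℝ) (i : Fin n) (a : Fin m) :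
    (Pmat n m t *ᵥ v) (i,a) = (Smat n t *ᵥ (fun i' => v (i',a))) i := by
  simp only [Matrix.mulVec, dotProduct, Pmat, Smat, Matrix.of_apply,
    Fintype.sum_prod_type]
  apply Finset.sum_congr rfl
  intro j _
  rw [Finset.sum_eq_single a]
  · simp
  · intro c _ hc
    rw [if_neg (Ne.symm hc), zero_mul]
  · intro h
    exact absurd (Finset.mem_univ _) h

lemma Pquad (n m : ℕ) (t : ℝ) (v : Fin n × Fin m → ℝ) :
    v ⬝ᵥ (Pmat n m t *ᵥ v)
      = ∑ a : Fin m, (fun i' => v (i',a)) ⬝ᵥ (Smat n t *ᵥ (fun i' => v (i',a))) := by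
  simp only [dotProduct, Fintype.sum_prod_type]
  rw [Finset.sum_comm]
  apply Finset.sum_congr rfl
  intro a _
  apply Finset.sum_congr rfl
  intro i _
  rw [Pmat_mulVec]

lemma vsplit (n m : ℕ) (v : Fin n × Fin m → ℝ) :
    v ⬝ᵥ v = ∑ a : Fin m, (fun i' => v (i',a)) ⬝ᵥ (fun i' => v (i',a)) := by
  simp only [dotProduct, Fintype.sum_prod_type]
  exact Finset.sum_comm

lemma Pmat_transpose (n m : ℕ) (t : ℝ) : (Pmat n m t)ᵀ = Pmat n m t := by
  ext p q
  simp only [Matrix.transpose_apply, Pmat, Matrix.of_apply]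
  by_cases h : p.2 = q.2
  · rw [if_pos h, if_pos h.symm, sFun_symm]
  · rw [if_neg h, if_neg (Ne.symm h)]

lemma L1 (n m : ℕ) (t : ℝ) (ht : t ≠ 0) :
    Pmat n m t * primeA n m + (primeA n m)ᵀ * Pmat n m t + t⁻¹ • Pmat n m t
      = (primeC n m)ᵀ * primeC n m := by
  ext ⟨i, a⟩ ⟨j, b⟩
  have h1 : (Pmat n m t * primeA n m) (i,a) (j,b)
      = if a = b then (if (j:ℕ) = 0 then 0 else sFun t (i:ℕ) ((j:ℕ)-1)) else 0 := by
    rw [Matrix.mul_apply]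
    rw [Fintype.sum_prod_type]
    have hinner : ∀ k : Fin n,
        (∑ c : Fin m, Pmat n m t (i,a) (k,c) * primeA n m (k,c) (j,b))
          = if a = b then (if (k:ℕ)+1 = (j:ℕ) then sFun t (i:ℕ) (k:ℕ) else 0) else 0 := by
      intro k
      rw [Finset.sum_eq_single a]
      · simp only [Pmat, primeA, Matrix.of_apply, if_pos rfl]
        by_cases hab : a = b
        · simp [hab]
        · simp [hab]
      · intro c _ hc
        simp only [Pmat, Matrix.of_apply]
        rw [if_neg (Ne.symm hc), zero_mul]
      · intro h; exact absurd (Finset.mem_univ _) h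
    simp only [hinner]
    by_cases hab : a = b
    · simp only [if_pos hab]
      exact sum_shift (fun k => sFun t (i:ℕ) k) j
    · simp [hab]
  have h2 : ((primeA n m)ᵀ * Pmat n m t) (i,a) (j,b)
      = if a = b then (if (i:ℕ) = 0 then 0 else sFun t ((i:ℕ)-1) (j:ℕ)) else 0 := by
    rw [Matrix.mul_apply]
    rw [Fintype.sum_prod_type]
    have hinner : ∀ k : Fin n,
        (∑ c : Fin m, (primeA n m)ᵀ (i,a) (k,c) * Pmat n m t (k,c) (j,b))
          = if a = b then (if (k:ℕ)+1 = (i:ℕ) then sFun t (k:ℕ) (j:ℕ) else 0) else 0 := by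
      intro k
      rw [Finset.sum_eq_single a]
      · simp only [Pmat, primeA, Matrix.transpose_apply, Matrix.of_apply]
        by_cases hab : a = b
        · simp [hab]
        · simp [hab]
      · intro c _ hc
        simp only [Pmat, primeA, Matrix.transpose_apply, Matrix.of_apply]
        by_cases hk : (k:ℕ)+1 = (i:ℕ) ∧ c = a
        · exact absurd hk.2 hc
        · rw [if_neg hk, zero_mul]
      · intro h; exact absurd (Finset.mem_univ _) h
    simp only [hinner]
    by_cases hab : a = b
    · simp only [if_pos hab]
      exact sum_shift (fun k => sFun t k (j:ℕ)) i
    · simp [hab]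
  have h4 : ((primeC n m)ᵀ * primeC n m) (i,a) (j,b)
      = if ((i:ℕ) = 0 ∧ (j:ℕ) = 0) ∧ a = b then 1 else 0 := by
    rw [Matrix.mul_apply]
    rw [Finset.sum_eq_single a]
    · simp only [primeC, Matrix.transpose_apply, Matrix.of_apply]
      by_cases hi : (i:ℕ) = 0 <;> by_cases hj : (j:ℕ) = 0 <;> by_cases hab : a = b <;>
        simp [hi, hj, hab, eq_comm]
    · intro c _ hc
      simp only [primeC, Matrix.transpose_apply, Matrix.of_apply]
      by_cases hi : (i:ℕ) = 0 ∧ a = c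
      · exact absurd hi.2 (Ne.symm hc)
      · rw [if_neg hi, zero_mul]
    · intro h; exact absurd (Finset.mem_univ _) h
  have h3 : Pmat n m t (i,a) (j,b) = if a = b then sFun t (i:ℕ) (j:ℕ) else 0 := rfl
  simp only [Matrix.add_apply, Matrix.smul_apply, smul_eq_mul]
  rw [h1, h2, h4, h3]
  by_cases hab : a = b
  · simp only [if_pos hab]
    rw [lyap t ht (i:ℕ) (j:ℕ)]
    by_cases hij : (i:ℕ) = 0 ∧ (j:ℕ) = 0
    · rw [if_pos hij, if_pos ⟨hij, hab⟩]
    · rw [if_neg hij, if_neg (by tauto)]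
  · simp only [if_neg hab, mul_zero, add_zero]
    rw [if_neg (by tauto)]

lemma dot_self_nonneg {k : Type*} [Fintype k] (v : k → ℝ) : 0 ≤ v ⬝ᵥ v :=
  Finset.sum_nonneg fun j _ => mul_self_nonneg _

lemma dot_self_pos {k : Type*} [Fintype k] (v : k → ℝ) (hv : v ≠ 0) : 0 < v ⬝ᵥ v := by
  rcases (dot_self_nonneg v).lt_or_eq with h | h
  · exact h
  exfalso
  apply hv
  funext i
  have h2 : ∀ j ∈ Finset.univ (α := k), 0 ≤ v j * v j := fun j _ => mul_self_nonneg _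
  have h3 : v i * v i ≤ 0 :=
    le_of_le_of_eq (Finset.single_le_sum h2 (Finset.mem_univ i)) h.symm
  exact mul_self_eq_zero.1 (le_antisymm h3 (mul_self_nonneg _))

lemma Ssym (n : ℕ) (t : ℝ) : (Smat n t)ᵀ = Smat n t := by
  ext i j
  simp only [Matrix.transpose_apply, Smat, Matrix.of_apply]
  exact sFun_symm t _ _

lemma Spsd (n : ℕ) (t : ℝ) (ht0 : 0 < t) (u : Fin n → ℝ) : 0 ≤ u ⬝ᵥ (Smat n t *ᵥ u) := by
  rw [Squad, P1quad]
  apply mul_nonneg ht0.le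
  exact Finset.sum_nonneg fun k _ => sq_nonneg _

/-- transpose-symmetric quadratic manipulation: v ⬝ᵥ (M *ᵥ x) = (Mᵀ *ᵥ v) ⬝ᵥ x -/
lemma dot_mulVec_eq {k l : Type*} [Fintype k] [Fintype l] (M : Matrix k l ℝ) (v : k → ℝ)
    (x : l → ℝ) : v ⬝ᵥ (M *ᵥ x) = (Mᵀ *ᵥ v) ⬝ᵥ x := by
  rw [Matrix.dotProduct_mulVec, Matrix.mulVec_transpose]

lemma Cterm_nonneg (n m : ℕ) (v : Fin n × Fin m → ℝ) :
    0 ≤ v ⬝ᵥ (((primeC n m)ᵀ * primeC n m) *ᵥ v) := by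
  rw [← Matrix.mulVec_mulVec, dot_mulVec_eq, Matrix.transpose_transpose]
  exact dot_self_nonneg _

lemma single_dot {n : ℕ} (p : Fin n) (y : Fin n → ℝ) :
    (Pi.single p 1 : Fin n → ℝ) ⬝ᵥ y = y p := by
  unfold dotProduct
  rw [Finset.sum_eq_single p]
  · rw [Pi.single_eq_same, one_mul]
  · intro c _ hc
    rw [Pi.single_eq_of_ne hc, zero_mul]
  · intro h; exact absurd (Finset.mem_univ _) h

lemma Slast (n : ℕ) (hn : 1 ≤ n) (t : ℝ) (ht0 : 0 < t) (u : Fin n → ℝ) :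
    ((Smat n t *ᵥ u) (⟨n-1, by omega⟩ : Fin n))^2
      ≤ sFun t (n-1) (n-1) * (u ⬝ᵥ (Smat n t *ᵥ u)) := by
  set p : Fin n := ⟨n-1, by omega⟩ with hp
  set e : Fin n → ℝ := Pi.single p 1 with he'
  have he : ∀ w : Fin n → ℝ, e ⬝ᵥ (Smat n t *ᵥ w) = (Smat n t *ᵥ w) p := fun w => single_dot p _
  have hee : e ⬝ᵥ (Smat n t *ᵥ e) = sFun t (n-1) (n-1) := by
    rw [he e]
    show (∑ j : Fin n, Smat n t p j * e j) = _
    rw [Finset.sum_eq_single p]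
    · rw [he', Pi.single_eq_same, mul_one]
      show sFun t (p:ℕ) (p:ℕ) = _
      rfl
    · intro c _ hc
      rw [he', Pi.single_eq_of_ne hc, mul_zero]
    · intro h; exact absurd (Finset.mem_univ _) h
  have cs := cs_psd (Smat n t) (Ssym n t) (fun x => Spsd n t ht0 x) e u
  rw [he u, hee] at cs
  exact cs

lemma quadB (n m : ℕ) (hn : 1 ≤ n) (t : ℝ) (v : Fin n × Fin m → ℝ) :
    v ⬝ᵥ ((Pmat n m t * primeB n m * (primeB n m)ᵀ * Pmat n m t) *ᵥ v)
      = ∑ a : Fin m, ((Smat n t *ᵥ (fun i' => v (i',a))) (⟨n-1, by omega⟩ : Fin n))^2 := by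
  rw [← Matrix.mulVec_mulVec, ← Matrix.mulVec_mulVec, ← Matrix.mulVec_mulVec]
  rw [dot_mulVec_eq, Pmat_transpose]
  rw [dot_mulVec_eq (primeB n m)]
  have hz : ∀ a : Fin m, ((primeB n m)ᵀ *ᵥ (Pmat n m t *ᵥ v)) a
      = (Smat n t *ᵥ (fun i' => v (i',a))) (⟨n-1, by omega⟩ : Fin n) := by
    intro a
    show (∑ p : Fin n × Fin m, (primeB n m)ᵀ a p * (Pmat n m t *ᵥ v) p) = _
    rw [Finset.sum_eq_single ((⟨n-1, by omega⟩ : Fin n), a)]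
    · have h1 : (primeB n m)ᵀ a ((⟨n-1, by omega⟩ : Fin n), a) = 1 := by
        simp [primeB]
      rw [h1, one_mul, Pmat_mulVec]
    · intro c _ hc
      simp only [Matrix.transpose_apply, primeB, Matrix.of_apply]
      rw [if_neg, zero_mul]
      intro hcc
      apply hc
      have : c.1 = (⟨n-1, by omega⟩ : Fin n) := Fin.ext hcc.1
      rw [Prod.ext_iff]
      exact ⟨this, hcc.2⟩
    · intro h; exact absurd (Finset.mem_univ _) h
  unfold dotProduct
  apply Finset.sum_congr rfl
  intro a _
  rw [hz a, sq]

theorem stmt9 (n_o m : ℕ) (hn : 1 ≤ n_o) (hm : 1 ≤ m) (ν : ℝ) (hν : 0 < ν) :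
    ∃ (PP : Matrix (Fin n_o × Fin m) (Fin n_o × Fin m) ℝ)
      (KK : Matrix (Fin n_o × Fin m) (Fin m) ℝ) (q : ℝ),
      PP.PosDef ∧ 0 < q ∧
      ∀ v : Fin n_o × Fin m → ℝ,
        v ⬝ᵥ ((PP * (primeA n_o m - KK * primeC n_o m)
              + (primeA n_o m - KK * primeC n_o m)ᵀ * PP
              + (2 * q) • (1 : Matrix (Fin n_o × Fin m) (Fin n_o × Fin m) ℝ)
              + (1 / (q * ν ^ 2)) • (PP * primeB n_o m * (primeB n_o m)ᵀ * PP)) *ᵥ v)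
          ≤ 0 := by
  haveI : Nonempty (Fin n_o) := ⟨⟨0, by omega⟩⟩
  obtain ⟨lam, hlam, hlb⟩ := exists_lambda (P1mat n_o) (fun v hv => P1pos n_o v hv)
  set b : ℝ := (((2*(n_o-1)).choose (n_o-1) : ℕ) : ℝ) with hbdef
  have hb : 0 < b := by
    rw [hbdef]
    exact_mod_cast Nat.choose_pos (by omega)
  set t : ℝ := min 1 (ν * Real.sqrt (lam/(8*b))) with htdef
  have ht0 : 0 < t :=
    lt_min one_pos (mul_pos hν (Real.sqrt_pos.2 (div_pos hlam (by positivity))))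
  have ht1 : t ≤ 1 := min_le_left _ _
  have htsq : 8*b*t^2 ≤ lam*ν^2 := by
    have h1 : t ≤ ν * Real.sqrt (lam/(8*b)) := min_le_right _ _
    have h2 : t^2 ≤ ν^2 * (lam/(8*b)) := by
      have h3 := mul_le_mul h1 h1 ht0.le (by positivity)
      calc t^2 = t*t := sq t
        _ ≤ (ν * Real.sqrt (lam/(8*b))) * (ν * Real.sqrt (lam/(8*b))) := h3
        _ = ν^2 * (Real.sqrt (lam/(8*b)) * Real.sqrt (lam/(8*b))) := by ring
        _ = ν^2 * (lam/(8*b)) := by rw [Real.mul_self_sqrt (by positivity)]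
    have h4 := mul_le_mul_of_nonneg_left h2 (by positivity : (0:ℝ) ≤ 8*b)
    calc 8*b*t^2 ≤ 8*b*(ν^2 * (lam/(8*b))) := h4
      _ = lam * ν^2 := by field_simp
  set PP := Pmat n_o m t with hPPdef
  have hPsym : PPᵀ = PP := Pmat_transpose _ _ _
  set T : ℝ := t^(2*(n_o-1)) with hTdef
  have hT : 0 < T := pow_pos ht0 _
  have hTt : t^(2*(n_o-1)+1) = T*t := pow_succ t _
  have hPLB : ∀ v : Fin n_o × Fin m → ℝ, lam * (T*t) * (v ⬝ᵥ v) ≤ v ⬝ᵥ (PP *ᵥ v) := by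
    intro v
    rw [hPPdef, Pquad, vsplit n_o m v, Finset.mul_sum]
    apply Finset.sum_le_sum
    intro a _
    have h := SLB n_o t ht0 ht1 lam hlb hlam (fun i' => v (i',a))
    rwa [hTt] at h
  have hPpos : PP.PosDef := by
    rw [Matrix.posDef_iff_dotProduct_mulVec]
    constructor
    · have hH : PPᴴ = PPᵀ := by
        ext p r
        simp [Matrix.conjTranspose_apply, Matrix.transpose_apply]
      show PPᴴ = PP
      rw [hH, hPsym]
    · intro x hx
      have hsx : star x = x := by
        funext i; simp
      rw [hsx]
      calc (0:ℝ) < lam * (T*t) * (x ⬝ᵥ x) := by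
            have := dot_self_pos x hx
            positivity
        _ ≤ x ⬝ᵥ (PP *ᵥ x) := hPLB x
  set q : ℝ := lam * T / 4 with hqdef
  have hq : 0 < q := by positivity
  have hdet : IsUnit PP.det := hPpos.det_pos.ne'.isUnit
  refine ⟨PP, PP⁻¹ * (primeC n_o m)ᵀ, q, hPpos, hq, ?_⟩
  intro v
  set K := PP⁻¹ * (primeC n_o m)ᵀ with hKdef
  have hPK : PP * K = (primeC n_o m)ᵀ := by
    rw [hKdef, ← Matrix.mul_assoc, Matrix.mul_nonsing_inv _ hdet, Matrix.one_mul]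
  have hKtP : Kᵀ * PP = primeC n_o m := by
    have h1 : (PPᵀ * K)ᵀ = Kᵀ * PP := by
      rw [Matrix.transpose_mul, Matrix.transpose_transpose]
    rw [← h1, hPsym, hPK, Matrix.transpose_transpose]
  have hsum : PP * primeA n_o m + (primeA n_o m)ᵀ * PP
      = (primeC n_o m)ᵀ * primeC n_o m - t⁻¹ • PP :=
    eq_sub_of_add_eq (L1 n_o m t ht0.ne')
  have hEq : PP * (primeA n_o m - K * primeC n_o m)
        + (primeA n_o m - K * primeC n_o m)ᵀ * PP
      = -(t⁻¹ • PP) - (primeC n_o m)ᵀ * primeC n_o m := by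
    rw [Matrix.mul_sub, Matrix.transpose_sub, Matrix.sub_mul, Matrix.transpose_mul,
      ← Matrix.mul_assoc PP K (primeC n_o m), hPK,
      Matrix.mul_assoc ((primeC n_o m)ᵀ) (Kᵀ) PP, hKtP]
    calc PP * primeA n_o m - (primeC n_o m)ᵀ * primeC n_o m
          + ((primeA n_o m)ᵀ * PP - (primeC n_o m)ᵀ * primeC n_o m)
        = (PP * primeA n_o m + (primeA n_o m)ᵀ * PP)
          - (primeC n_o m)ᵀ * primeC n_o m - (primeC n_o m)ᵀ * primeC n_o m := by abel
      _ = ((primeC n_o m)ᵀ * primeC n_o m - t⁻¹ • PP)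
          - (primeC n_o m)ᵀ * primeC n_o m - (primeC n_o m)ᵀ * primeC n_o m := by rw [hsum]
      _ = -(t⁻¹ • PP) - (primeC n_o m)ᵀ * primeC n_o m := by abel
  have hsplit : v ⬝ᵥ ((PP * (primeA n_o m - K * primeC n_o m)
        + (primeA n_o m - K * primeC n_o m)ᵀ * PP
        + (2 * q) • (1 : Matrix (Fin n_o × Fin m) (Fin n_o × Fin m) ℝ)
        + (1 / (q * ν ^ 2)) • (PP * primeB n_o m * (primeB n_o m)ᵀ * PP)) *ᵥ v)
      = -(t⁻¹ * (v ⬝ᵥ (PP *ᵥ v)))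
        - v ⬝ᵥ (((primeC n_o m)ᵀ * primeC n_o m) *ᵥ v)
        + (2*q) * (v ⬝ᵥ v)
        + (1 / (q * ν ^ 2)) * (v ⬝ᵥ ((PP * primeB n_o m * (primeB n_o m)ᵀ * PP) *ᵥ v)) := by
    rw [Matrix.add_mulVec, Matrix.add_mulVec, hEq]
    rw [Matrix.sub_mulVec, Matrix.neg_mulVec, Matrix.smul_mulVec,
      Matrix.smul_mulVec, Matrix.one_mulVec, Matrix.smul_mulVec]
    rw [dotProduct_add, dotProduct_add, dotProduct_sub,
      dotProduct_neg, dotProduct_smul, dotProduct_smul,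
      dotProduct_smul]
    simp only [smul_eq_mul]
  rw [hsplit]
  -- bounds
  set f : ℝ := v ⬝ᵥ (PP *ᵥ v) with hfdef
  have hvv : 0 ≤ v ⬝ᵥ v := dot_self_nonneg v
  have hf : lam * (T*t) * (v ⬝ᵥ v) ≤ f := hPLB v
  have hf0 : 0 ≤ f := le_trans (by positivity) hf
  have hh : 0 ≤ v ⬝ᵥ (((primeC n_o m)ᵀ * primeC n_o m) *ᵥ v) := Cterm_nonneg n_o m v
  have hSbb : sFun t (n_o-1) (n_o-1) = b * (T*t) := by
    unfold sFun
    rw [show (n_o-1)+(n_o-1) = 2*(n_o-1) by omega]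
    rw [Even.neg_one_pow ⟨n_o-1, by omega⟩, one_mul, hTt, hbdef]
  have hg : v ⬝ᵥ ((PP * primeB n_o m * (primeB n_o m)ᵀ * PP) *ᵥ v) ≤ (b*(T*t)) * f := by
    rw [hPPdef, quadB n_o m hn t v]
    calc ∑ a : Fin m, ((Smat n_o t *ᵥ (fun i' => v (i',a))) (⟨n_o-1, by omega⟩ : Fin n_o))^2
        ≤ ∑ a : Fin m, sFun t (n_o-1) (n_o-1)
            * ((fun i' => v (i',a)) ⬝ᵥ (Smat n_o t *ᵥ (fun i' => v (i',a)))) := by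
          apply Finset.sum_le_sum
          intro a _
          exact Slast n_o hn t ht0 _
      _ = (b*(T*t)) * f := by
          rw [← Finset.mul_sum, hSbb, hfdef, hPPdef, Pquad]
  -- final arithmetic
  have e1 : (2*q) * (v ⬝ᵥ v) ≤ t⁻¹ * f / 2 := by
    have h5 := mul_le_mul_of_nonneg_left hf (by positivity : (0:ℝ) ≤ 1/(2*t))
    have id1 : (1/(2*t)) * (lam*(T*t)*(v ⬝ᵥ v)) = 2*q*(v ⬝ᵥ v) := by
      rw [hqdef]; field_simp; ring
    have id2 : (1/(2*t)) * f = t⁻¹ * f / 2 := by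
      rw [one_div, mul_inv]; ring
    rw [id1, id2] at h5
    exact h5
  have e2 : (1 / (q * ν ^ 2)) * (v ⬝ᵥ ((PP * primeB n_o m * (primeB n_o m)ᵀ * PP) *ᵥ v))
      ≤ t⁻¹ * f / 2 := by
    have s1 : (1 / (q * ν ^ 2)) * (v ⬝ᵥ ((PP * primeB n_o m * (primeB n_o m)ᵀ * PP) *ᵥ v))
        ≤ (1 / (q * ν ^ 2)) * ((b*(T*t)) * f) := by
      apply mul_le_mul_of_nonneg_left hg (by positivity)
    have key : (1 / (q * ν ^ 2)) * (b*(T*t)) ≤ t⁻¹/2 := by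
      rw [hqdef]
      rw [show (1/((lam*T/4)*ν^2))*(b*(T*t)) = (4*b*t)/(lam*ν^2) by field_simp]
      rw [show t⁻¹/2 = 1/(2*t) by rw [one_div, mul_inv]; ring]
      rw [div_le_div_iff₀ (by positivity) (by positivity)]
      nlinarith [htsq]
    have s2 : (1 / (q * ν ^ 2)) * ((b*(T*t)) * f) ≤ (t⁻¹/2) * f := by
      rw [← mul_assoc]
      exact mul_le_mul_of_nonneg_right key hf0
    calc (1 / (q * ν ^ 2)) * (v ⬝ᵥ ((PP * primeB n_o m * (primeB n_o m)ᵀ * PP) *ᵥ v))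
        ≤ (1 / (q * ν ^ 2)) * ((b*(T*t)) * f) := s1
      _ ≤ (t⁻¹/2) * f := s2
      _ = t⁻¹ * f / 2 := by ring
  have hsplitval : t⁻¹ * f / 2 + t⁻¹ * f / 2 = t⁻¹ * f := by ring
  linarith [e1, e2, hh]
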